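/- For all natural numbers n, |B_{p,r,a,m}(n)| = |E_{p,r,a,m}(n)|; that is, the number of partitions of n in which every multiplicity is congruent to ja modulo p for some 0 ≤ j ≤ p − 1 and lies between j(pr + a) and j(pr + a) + p(m − 1), equals the number of partitions of n in which every part divisible by p is not divisible by pm, and every part not divisible by p is congruent to −s(pr + a) modulo p²r + pa for some s ∈ {1, 2, …, p − 1}. -/

import Mathlib

namespace SubbaraoAux

/-- base-q digit -/
def dig (q c e : ℕ) : ℕ := c / q ^ e % q

lemma dig_lt {q : ℕ} (hq : 0 < q) (c e : ℕ) : dig q c e < q := Nat.mod_lt _ (by positivity)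

lemma dig_zero (q e : ℕ) : dig q 0 e = 0 := by simp [dig]

lemma pow_le_of_dig_ne_zero {q c e : ℕ} (h : dig q c e ≠ 0) : q ^ e ≤ c := by
  by_contra hlt
  push_neg at hlt
  simp [dig, Nat.div_eq_of_lt hlt] at h

lemma dig_succ (q c e : ℕ) : dig q c (e + 1) = dig q (c / q) e := by
  simp [dig, Nat.div_div_eq_div_mul, pow_succ']

lemma sum_dig {q : ℕ} (hq : 0 < q) : ∀ (N : ℕ) (c : ℕ), c < q ^ N →
    ∑ e ∈ Finset.range N, q ^ e * dig q c e = c := by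
  intro N
  induction N with
  | zero => intro c hc; simp at hc ⊢; omega
  | succ N ih =>
    intro c hc
    rw [Finset.sum_range_succ']
    have h1 : ∀ e, q ^ (e + 1) * dig q c (e + 1) = q * (q ^ e * dig q (c / q) e) := by
      intro e; rw [dig_succ]; ring
    simp only [h1, ← Finset.mul_sum]
    rw [ih (c / q) (by rwa [Nat.div_lt_iff_lt_mul hq, ← pow_succ])]
    have := Nat.div_add_mod c q
    simp only [dig, pow_zero, Nat.div_one, one_mul]
    omega

lemma sum_lt_pow {q : ℕ} (a : ℕ → ℕ) (ha : ∀ e, a e < q) : ∀ N,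
    ∑ e ∈ Finset.range N, q ^ e * a e < q ^ N := by
  intro N
  induction N with
  | zero => simp
  | succ N ih =>
    rw [Finset.sum_range_succ]
    have h1 : q ^ N * a N ≤ q ^ N * (q - 1) := Nat.mul_le_mul_left _ (by
      have := ha N; omega)
    have hq : 0 < q := (Nat.zero_le _).trans_lt (ha 0)
    have : q ^ N * (q - 1) + q ^ N = q ^ (N + 1) := by
      cases q with
      | zero => omega
      | succ q' => simp [Nat.succ_sub_one]; ring
    omega

lemma dig_sum {q : ℕ} (a : ℕ → ℕ) (ha : ∀ e, a e < q) : ∀ (N : ℕ) (e : ℕ),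
    dig q (∑ e ∈ Finset.range N, q ^ e * a e) e = if e < N then a e else 0 := by
  have hq : 0 < q := (Nat.zero_le _).trans_lt (ha 0)
  intro N
  induction N generalizing a with
  | zero => intro e; simp [dig_zero]
  | succ N ih =>
    intro e
    have hsplit : ∑ e ∈ Finset.range (N + 1), q ^ e * a e
        = a 0 + q * ∑ e ∈ Finset.range N, q ^ e * a (e + 1) := by
      rw [Finset.sum_range_succ', Finset.mul_sum]
      simp only [pow_succ', one_mul, mul_assoc, pow_zero]
      omega
    rw [hsplit]
    have hdiv : (a 0 + q * ∑ e ∈ Finset.range N, q ^ e * a (e + 1)) / q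
        = ∑ e ∈ Finset.range N, q ^ e * a (e + 1) := by
      rw [Nat.add_mul_div_left _ _ hq, Nat.div_eq_of_lt (ha 0)]
      omega
    cases e with
    | zero =>
      simp only [dig, pow_zero, Nat.div_one]
      rw [Nat.add_mul_mod_self_left, Nat.mod_eq_of_lt (ha 0)]
      simp
    | succ e =>
      rw [dig_succ, hdiv, ih (fun i => a (i + 1)) (fun i => ha (i + 1)) e]
      simp [Nat.succ_lt_succ_iff]

end SubbaraoAux

namespace SubbaraoAux

/-- largest `e` with `q ^ e ∣ i` (for `q ≥ 2`, `i ≥ 1`). -/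
def ord (q i : ℕ) : ℕ := Nat.findGreatest (fun e => q ^ e ∣ i) i

lemma pow_ord_dvd (q i : ℕ) : q ^ ord q i ∣ i := by
  unfold ord
  exact Nat.findGreatest_spec (P := fun e => q ^ e ∣ i) (n := i) (m := 0) (Nat.zero_le i)
    (by simp)

lemma le_of_pow_dvd {q e i : ℕ} (hq : 2 ≤ q) (hi : i ≠ 0) (h : q ^ e ∣ i) : e ≤ i := by
  have h1 : q ^ e ≤ i := Nat.le_of_dvd (Nat.pos_of_ne_zero hi) h
  calc e ≤ 2 ^ e := (Nat.lt_two_pow_self (n := e)).le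
    _ ≤ q ^ e := Nat.pow_le_pow_left hq e
    _ ≤ i := h1

lemma not_dvd_div_pow_ord {q i : ℕ} (hq : 2 ≤ q) (hi : i ≠ 0) : ¬ q ∣ i / q ^ ord q i := by
  intro hdvd
  have h1 : q ^ (ord q i + 1) ∣ i := by
    have := pow_ord_dvd q i
    rcases hdvd with ⟨k, hk⟩
    refine ⟨k, ?_⟩
    rw [pow_succ]
    have := Nat.div_mul_cancel this
    calc i = i / q ^ ord q i * q ^ ord q i := (Nat.div_mul_cancel (pow_ord_dvd q i)).symm
      _ = q * k * q ^ ord q i := by rw [hk]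
      _ = q ^ ord q i * q * k := by ring
  have h2 := Nat.findGreatest_is_greatest (Nat.lt_succ_self (ord q i))
    (le_of_pow_dvd hq hi h1)
  exact h2 h1

lemma ord_eq_of {q e u : ℕ} (hq : 2 ≤ q) (hu : 0 < u) (hnd : ¬ q ∣ u) :
    ord q (u * q ^ e) = e := by
  have hne : u * q ^ e ≠ 0 := by positivity
  have hdd : q ^ e ∣ u * q ^ e := dvd_mul_left _ _
  have hle : e ≤ ord q (u * q ^ e) :=
    Nat.le_findGreatest (le_of_pow_dvd hq hne hdd) hdd
  rcases Nat.lt_or_ge e (ord q (u * q ^ e)) with hlt | hge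
  · exfalso
    have h1 : q ^ (e + 1) ∣ u * q ^ e := dvd_trans (pow_dvd_pow q hlt) (pow_ord_dvd q _)
    rw [pow_succ] at h1
    have h2 : q ∣ u := by
      rcases h1 with ⟨k, hk⟩
      have hqe : 0 < q ^ e := by positivity
      have heq : u * q ^ e = q * k * q ^ e := by rw [hk]; ring
      exact ⟨k, Nat.eq_of_mul_eq_mul_right hqe heq⟩
    exact hnd h2
  · omega

lemma div_pow_ord {q : ℕ} (hq : 2 ≤ q) (e u : ℕ) :
    u * q ^ e / q ^ e = u := Nat.mul_div_cancel u (by positivity)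

end SubbaraoAux

namespace SubbaraoAux

/-- weight of a count function -/
def wsum (f : ℕ →₀ ℕ) : ℕ := f.sum fun i k => i * k

lemma wsum_eq_sum_subset {f : ℕ →₀ ℕ} {s : Finset ℕ} (hs : f.support ⊆ s) :
    wsum f = ∑ i ∈ s, i * f i :=
  Finsupp.sum_of_support_subset f hs _ (fun i _ => mul_zero i)

def Aset (q : ℕ) (j : ℕ →₀ ℕ) : Prop := j 0 = 0 ∧ ∀ i, j i < q

def Bset (q : ℕ) (C : ℕ →₀ ℕ) : Prop := ∀ y, C y ≠ 0 → ¬ q ∣ y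

/-- Glaisher forward map: from multiplicity-bounded to parts-restricted. -/
noncomputable def glaisherFwd (q : ℕ) (j : ℕ →₀ ℕ) : ℕ →₀ ℕ :=
  Finsupp.onFinset (Finset.range (j.support.sup id + 1))
    (fun y => if q ∣ y then 0 else
      ∑ e ∈ Finset.range (j.support.sup id + 1), q ^ e * j (y * q ^ e))
    (by
      intro y hy
      rw [Finset.mem_range]
      by_cases hdvd : q ∣ y
      · simp [hdvd] at hy
      · simp only [if_neg hdvd] at hy
        obtain ⟨e, _, he⟩ := Finset.exists_ne_zero_of_sum_ne_zero hy
        have hj : j (y * q ^ e) ≠ 0 := by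
          intro h0; rw [h0] at he; simp at he
        have hqe : 0 < q ^ e := by
          rcases Nat.eq_zero_or_pos (q ^ e) with h | h
          · rw [h] at he; simp at he
          · exact h
        have : y * q ^ e ≤ j.support.sup id :=
          Finset.le_sup (f := id) (Finsupp.mem_support_iff.mpr hj)
        have : y ≤ y * q ^ e := Nat.le_mul_of_pos_right y hqe
        omega)

/-- Glaisher backward map. -/
noncomputable def glaisherBwd (q : ℕ) (C : ℕ →₀ ℕ) : ℕ →₀ ℕ :=
  Finsupp.onFinset (Finset.range ((C.support.sup fun u => u * C u) + 1))
    (fun i => if i = 0 then 0 else dig q (C (i / q ^ ord q i)) (ord q i))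
    (by
      intro i hi
      rw [Finset.mem_range]
      by_cases h0 : i = 0
      · simp [h0] at hi
      · simp only [if_neg h0] at hi
        set v := ord q i
        set u := i / q ^ v with hu
        have h1 : q ^ v ≤ C u := pow_le_of_dig_ne_zero hi
        have hCu : C u ≠ 0 := by intro h; rw [h] at hi; simp [dig_zero] at hi
        have hi2 : u * q ^ v = i := Nat.div_mul_cancel (pow_ord_dvd q i)
        have : u * C u ≤ C.support.sup fun u => u * C u :=
          Finset.le_sup (f := fun u => u * C u) (Finsupp.mem_support_iff.mpr hCu)
        have : i ≤ u * C u := by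
          calc i = u * q ^ v := hi2.symm
            _ ≤ u * C u := Nat.mul_le_mul_left u h1
        omega)

lemma glaisherFwd_mem (q : ℕ) (j : ℕ →₀ ℕ) : Bset q (glaisherFwd q j) := by
  intro y hy hdvd
  simp only [glaisherFwd, Finsupp.onFinset_apply] at hy
  rw [if_pos hdvd] at hy
  exact hy rfl

lemma glaisherBwd_mem {q : ℕ} (hq : 0 < q) (C : ℕ →₀ ℕ) : Aset q (glaisherBwd q C) := by
  constructor
  · simp [glaisherBwd]
  · intro i
    simp only [glaisherBwd, Finsupp.onFinset_apply]
    by_cases h0 : i = 0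
    · simpa [h0] using hq
    · rw [if_neg h0]; exact dig_lt hq _ _

lemma aset_one {j : ℕ →₀ ℕ} (hj : Aset 1 j) : j = 0 := by
  ext i
  have := hj.2 i
  simpa using Nat.lt_one_iff.mp this

lemma glaisherFwd_zero (q : ℕ) : glaisherFwd q 0 = 0 := by
  ext y
  simp only [glaisherFwd, Finsupp.onFinset_apply, Finsupp.coe_zero, Pi.zero_apply]
  split <;> simp

lemma glaisherBwd_glaisherFwd {q : ℕ} (hq : 0 < q) {j : ℕ →₀ ℕ} (hj : Aset q j) :
    glaisherBwd q (glaisherFwd q j) = j := by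
  by_cases hq2' : 2 ≤ q
  case neg =>
    have hq1 : q = 1 := by omega
    subst hq1
    rw [aset_one hj, glaisherFwd_zero]
    ext i
    simp [glaisherBwd, dig_zero]
  case pos =>
    have hq2 : 2 ≤ q := hq2'
    ext i
    by_cases h0 : i = 0
    · simp [glaisherBwd, h0, hj.1]
    · simp only [glaisherBwd, Finsupp.onFinset_apply, if_neg h0]
      set v := ord q i with hv
      set u := i / q ^ v with hu
      have hnd : ¬ q ∣ u := not_dvd_div_pow_ord hq2 h0
      have hi2 : u * q ^ v = i := Nat.div_mul_cancel (pow_ord_dvd q i)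
      have hu0 : u ≠ 0 := by intro h; rw [h] at hi2; simp at hi2; exact h0 hi2.symm
      have hfwd : glaisherFwd q j u =
          ∑ e ∈ Finset.range (j.support.sup id + 1), q ^ e * j (u * q ^ e) := by
        simp only [glaisherFwd, Finsupp.onFinset_apply, if_neg hnd]
      rw [hfwd, dig_sum (fun e => j (u * q ^ e)) (fun e => hj.2 _)]
      by_cases hvN : v < j.support.sup id + 1
      · rw [if_pos hvN, hi2]
      · rw [if_neg hvN]
        by_contra hne
        have hji : j i ≠ 0 := fun h => hne h.symm
        have h1 : i ≤ j.support.sup id := Finset.le_sup (f := id) (Finsupp.mem_support_iff.mpr hji)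
        have h2 : q ^ v ≤ i := by
          calc q ^ v ≤ 1 * q ^ v := by omega
            _ ≤ u * q ^ v := Nat.mul_le_mul_right _ (Nat.one_le_iff_ne_zero.mpr hu0)
            _ = i := hi2
        have h3 : v < 2 ^ v := Nat.lt_two_pow_self (n := v)
        have h4 : (2:ℕ) ^ v ≤ q ^ v := Nat.pow_le_pow_left hq2 v
        omega

lemma glaisherFwd_glaisherBwd {q : ℕ} (hq : 0 < q) {C : ℕ →₀ ℕ} (hC : Bset q C) :
    glaisherFwd q (glaisherBwd q C) = C := by
  ext y
  simp only [glaisherFwd, Finsupp.onFinset_apply]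
  by_cases hdvd : q ∣ y
  · rw [if_pos hdvd]
    by_contra hne
    exact hC y (fun h => hne h.symm) hdvd
  · rw [if_neg hdvd]
    have hq2 : 2 ≤ q := by
      by_contra h
      push_neg at h
      have h1 : q = 1 := by omega
      exact hdvd (by rw [h1]; exact one_dvd y)
    have hy0 : y ≠ 0 := fun h => hdvd (h ▸ dvd_zero q)
    have hy0' : 0 < y := Nat.pos_of_ne_zero hy0
    have hbwd : ∀ e, glaisherBwd q C (y * q ^ e) = dig q (C y) e := by
      intro e
      have hne : y * q ^ e ≠ 0 := by positivity
      simp only [glaisherBwd, Finsupp.onFinset_apply, if_neg hne]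
      rw [ord_eq_of hq2 hy0' hdvd, div_pow_ord hq2]
    simp only [hbwd]
    by_cases hCy : C y = 0
    · simp [hCy, dig_zero]
    · apply sum_dig hq
      -- C y < q ^ (N' + 1)
      set N' := (glaisherBwd q C).support.sup id with hN'
      set E := Nat.log q (C y) with hE
      have h1 : q ^ E ≤ C y := Nat.pow_log_le_self q hCy
      have h2 : C y < q ^ (E + 1) := Nat.lt_pow_succ_log_self hq2 _
      have hdigE : dig q (C y) E ≠ 0 := by
        have hge : 1 ≤ C y / q ^ E := Nat.one_le_div_iff (by positivity) |>.mpr h1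
        have hlt : C y / q ^ E < q := by
          rw [Nat.div_lt_iff_lt_mul (by positivity : (0:ℕ) < q ^ E)]
          calc C y < q ^ (E + 1) := h2
            _ = q * q ^ E := by ring
        simp only [dig]
        rw [Nat.mod_eq_of_lt hlt]
        omega
      have hmem : y * q ^ E ∈ (glaisherBwd q C).support := by
        rw [Finsupp.mem_support_iff, hbwd]
        exact hdigE
      have h3 : y * q ^ E ≤ N' := Finset.le_sup (f := id) hmem
      have h4 : E < y * q ^ E := by
        have : E < 2 ^ E := Nat.lt_two_pow_self (n := E)
        have h5 : (2:ℕ) ^ E ≤ q ^ E := Nat.pow_le_pow_left hq2 E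
        have h6 : q ^ E ≤ y * q ^ E := by
          calc q ^ E = 1 * q ^ E := (one_mul _).symm
            _ ≤ y * q ^ E := Nat.mul_le_mul_right _ hy0'
        omega
      calc C y < q ^ (E + 1) := h2
        _ ≤ q ^ (N' + 1) := Nat.pow_le_pow_right (by omega) (by omega)

end SubbaraoAux

namespace SubbaraoAux

lemma wsum_glaisherFwd {q : ℕ} (hq : 0 < q) {j : ℕ →₀ ℕ} (hj : Aset q j) :
    wsum (glaisherFwd q j) = wsum j := by
  by_cases hq2' : 2 ≤ q
  case neg =>
    have hq1 : q = 1 := by omega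
    subst hq1
    rw [aset_one hj, glaisherFwd_zero]
  case pos =>
    have hq2 : 2 ≤ q := hq2'
    set N := j.support.sup id with hN
    set C := glaisherFwd q j with hCdef
    have hCval : ∀ y ∈ C.support, y * C y =
        ∑ e ∈ Finset.range (N + 1), (y * q ^ e) * j (y * q ^ e) := by
      intro y hy
      have hCy : C y ≠ 0 := Finsupp.mem_support_iff.mp hy
      have hdvd : ¬ q ∣ y := glaisherFwd_mem q j y hCy
      have : C y = ∑ e ∈ Finset.range (N + 1), q ^ e * j (y * q ^ e) := by
        simp only [hCdef, glaisherFwd, Finsupp.onFinset_apply, if_neg hdvd, hN]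
      rw [this, Finset.mul_sum]
      apply Finset.sum_congr rfl
      intro e _
      ring
    have h1 : wsum C = ∑ y ∈ C.support, y * C y := rfl
    rw [h1, Finset.sum_congr rfl hCval, ← Finset.sum_product']
    have h2 : wsum j = ∑ i ∈ j.support, i * j i := rfl
    rw [h2]
    apply Finset.sum_bij_ne_zero (i := fun yp _ _ => yp.1 * q ^ yp.2)
    · -- maps into j.support
      intro ⟨y, e⟩ h1 h2
      simp only [ne_eq, Nat.mul_eq_zero] at h2
      rw [Finsupp.mem_support_iff]
      intro h0
      exact h2 (Or.inr h0)
    · -- injective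
      intro ⟨y, e⟩ hy1 hy2 ⟨y', e'⟩ hy1' hy2' heq
      have hymem : y ∈ C.support := (Finset.mem_product.mp hy1).1
      have hymem' : y' ∈ C.support := (Finset.mem_product.mp hy1').1
      have hdy : ¬ q ∣ y := glaisherFwd_mem q j y (Finsupp.mem_support_iff.mp hymem)
      have hdy' : ¬ q ∣ y' := glaisherFwd_mem q j y' (Finsupp.mem_support_iff.mp hymem')
      have hy0 : 0 < y := Nat.pos_of_ne_zero (fun h => hdy (h ▸ dvd_zero q))
      have hy0' : 0 < y' := Nat.pos_of_ne_zero (fun h => hdy' (h ▸ dvd_zero q))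
      have he : e = e' := by
        have := ord_eq_of hq2 hy0 hdy (e := e)
        have := ord_eq_of hq2 hy0' hdy' (e := e')
        rw [← ord_eq_of hq2 hy0 hdy (e := e), ← ord_eq_of hq2 hy0' hdy' (e := e'), heq]
      subst he
      have : y = y' := Nat.eq_of_mul_eq_mul_right (by positivity) heq
      simp [this]
    · -- surjective
      intro b hb hgb
      have hjb : j b ≠ 0 := Finsupp.mem_support_iff.mp hb
      have hb0 : b ≠ 0 := fun h => hjb (h ▸ hj.1)
      set v := ord q b with hv
      set u := b / q ^ v with hu
      have hnd : ¬ q ∣ u := not_dvd_div_pow_ord hq2 hb0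
      have hb2 : u * q ^ v = b := Nat.div_mul_cancel (pow_ord_dvd q b)
      have hbN : b ≤ N := Finset.le_sup (f := id) hb
      have hvN : v < N + 1 := by
        have h3 : v < 2 ^ v := Nat.lt_two_pow_self (n := v)
        have h4 : (2:ℕ) ^ v ≤ q ^ v := Nat.pow_le_pow_left hq2 v
        have h5 : q ^ v ≤ b := Nat.le_of_dvd (Nat.pos_of_ne_zero hb0) (pow_ord_dvd q b)
        omega
      have hCu : C u ≠ 0 := by
        have hval : C u = ∑ e ∈ Finset.range (N + 1), q ^ e * j (u * q ^ e) := by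
          simp only [hCdef, glaisherFwd, Finsupp.onFinset_apply, if_neg hnd, hN]
        rw [hval]
        have hterm : 0 < q ^ v * j (u * q ^ v) := by
          rw [hb2]
          have : 0 < j b := Nat.pos_of_ne_zero hjb
          positivity
        have hle : q ^ v * j (u * q ^ v) ≤ ∑ e ∈ Finset.range (N + 1), q ^ e * j (u * q ^ e) :=
          Finset.single_le_sum (f := fun e => q ^ e * j (u * q ^ e))
            (fun e _ => Nat.zero_le _) (Finset.mem_range.mpr hvN)
        omega
      refine ⟨⟨u, v⟩, ?_, ?_, hb2⟩
      · exact Finset.mem_product.mpr ⟨Finsupp.mem_support_iff.mpr hCu, Finset.mem_range.mpr hvN⟩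
      · rw [hb2]; exact hgb
    · -- values agree
      intro ⟨y, e⟩ h1 h2
      rfl

end SubbaraoAux

namespace SubbaraoAux

lemma wsum_toFinsupp (s : Multiset ℕ) : wsum (Multiset.toFinsupp s) = s.sum := by
  induction s using Multiset.induction with
  | empty => simp [wsum]
  | cons a s ih =>
    have h1 : Multiset.toFinsupp (a ::ₘ s) = Multiset.toFinsupp s + Finsupp.single a 1 := by
      rw [← Multiset.toFinsupp_singleton, ← Multiset.toFinsupp_add]
      congr 1
      rw [add_comm, Multiset.singleton_add]
    rw [h1]
    have h2 : wsum (Multiset.toFinsupp s + Finsupp.single a 1)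
        = wsum (Multiset.toFinsupp s) + wsum (Finsupp.single a 1) := by
      unfold wsum
      apply Finsupp.sum_add_index' (fun i => mul_zero i) (fun i b₁ b₂ => Nat.mul_add i b₁ b₂)
    rw [h2, ih]
    have h3 : wsum (Finsupp.single a 1) = a := by
      unfold wsum
      rw [Finsupp.sum_single_index (mul_zero a), mul_one]
    rw [h3, Multiset.sum_cons]
    omega

/-- Partitions of `n` with a count-condition correspond to finitely supported count functions. -/
noncomputable def partEquiv (n : ℕ) (P : (ℕ →₀ ℕ) → Prop) :
    {π : n.Partition // P (Multiset.toFinsupp π.parts)} ≃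
      {f : ℕ →₀ ℕ // (f 0 = 0 ∧ wsum f = n) ∧ P f} where
  toFun π := ⟨Multiset.toFinsupp π.1.parts, ⟨⟨by
      rw [Multiset.toFinsupp_apply, Multiset.count_eq_zero]
      intro h0
      exact absurd (π.1.parts_pos h0) (lt_irrefl 0), by
      rw [wsum_toFinsupp, π.1.parts_sum]⟩, π.2⟩⟩
  invFun f := ⟨⟨Finsupp.toMultiset f.1, by
      intro i hi
      rw [Finsupp.mem_toMultiset, Finsupp.mem_support_iff] at hi
      rcases Nat.eq_zero_or_pos i with h | h
      · exact absurd (h ▸ f.2.1.1) hi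
      · exact h, by
      have : (Finsupp.toMultiset f.1).sum = wsum f.1 := by
        rw [← wsum_toFinsupp, Finsupp.toMultiset_toFinsupp]
      rw [this, f.2.1.2]⟩, by
      simpa [Finsupp.toMultiset_toFinsupp] using f.2.2⟩
  left_inv π := by
    apply Subtype.ext
    cases π with
    | mk π hπ =>
      cases π with
      | mk parts h1 h2 => simp [Multiset.toFinsupp_toMultiset]
  right_inv f := by
    apply Subtype.ext
    simp [Finsupp.toMultiset_toFinsupp]

end SubbaraoAux

namespace SubbaraoAux

/-- the `j`-index recovered from a multiplicity. -/
noncomputable def jval (p a r : ℕ) (c : ℕ) : ℕ :=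
  ((c : ZMod p) * ((p * r + a : ℕ) : ZMod p)⁻¹).val

lemma L_coprime {p a : ℕ} (hco : Nat.gcd a p = 1) (r : ℕ) :
    Nat.Coprime (p * r + a) p := by
  have h1 : Nat.Coprime a p := hco
  have h2 : Nat.Coprime (a + p * r) p := (Nat.coprime_add_mul_left_left a p r).mpr h1
  have h3 : a + p * r = p * r + a := by ring
  rwa [h3] at h2

lemma jval_zero (p a r : ℕ) : jval p a r 0 = 0 := by
  simp [jval]

lemma jval_spec {p a r : ℕ} (hp : 0 < p) (hco : Nat.gcd a p = 1)
    {j t c : ℕ} (hj : j < p) (hc : c = j * (p * r + a) + p * t) :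
    jval p a r c = j := by
  haveI : NeZero p := ⟨hp.ne'⟩
  have hL : ((p * r + a : ℕ) : ZMod p) * ((p * r + a : ℕ) : ZMod p)⁻¹ = 1 :=
    ZMod.coe_mul_inv_eq_one _ (L_coprime hco r)
  have h1 : ((c : ℕ) : ZMod p) = (j : ZMod p) * ((p * r + a : ℕ) : ZMod p) := by
    rw [hc]
    push_cast
    rw [ZMod.natCast_self]
    ring
  unfold jval
  rw [h1, mul_assoc, hL, mul_one, ZMod.val_natCast_of_lt hj]

lemma jval_lt {p : ℕ} (hp : 0 < p) (a r c : ℕ) : jval p a r c < p := by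
  haveI : NeZero p := ⟨hp.ne'⟩
  exact ZMod.val_lt _

/-- the `t`-index recovered from a multiplicity. -/
noncomputable def tval (p a r : ℕ) (c : ℕ) : ℕ := (c - jval p a r c * (p * r + a)) / p

lemma tval_spec {p a r : ℕ} (hp : 0 < p) (hco : Nat.gcd a p = 1)
    {j t c : ℕ} (hj : j < p) (hc : c = j * (p * r + a) + p * t) :
    tval p a r c = t := by
  unfold tval
  rw [jval_spec hp hco hj hc, hc, Nat.add_sub_cancel_left, Nat.mul_div_cancel_left _ hp]

lemma tval_zero (p a r : ℕ) : tval p a r 0 = 0 := by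
  simp [tval, jval_zero]

/-- the B-condition in the theorem is equivalent to a two-digit mixed decomposition. -/
lemma bcond_iff {p m : ℕ} (hp : 0 < p) (hm : 1 ≤ m) (a r : ℕ) (c : ℕ) :
    (∃ j, j ≤ p - 1 ∧ c ≡ j * a [MOD p] ∧ j * (p * r + a) ≤ c ∧
        c ≤ j * (p * r + a) + p * (m - 1)) ↔
      (∃ j t, j < p ∧ t < m ∧ c = j * (p * r + a) + p * t) := by
  constructor
  · rintro ⟨j, hj1, hj2, hj3, hj4⟩
    have hjp : j < p := by omega
    have hmod : c ≡ j * (p * r + a) [MOD p] := by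
      have h1 : j * (p * r + a) = j * a + p * (j * r) := by ring
      have h2 : j * a + p * (j * r) ≡ j * a + 0 [MOD p] :=
        Nat.ModEq.add_left _ ((Nat.modEq_zero_iff_dvd).mpr ⟨j * r, rfl⟩)
      calc c ≡ j * a [MOD p] := hj2
        _ = j * a + 0 := by ring
        _ ≡ j * a + p * (j * r) [MOD p] := h2.symm
        _ = j * (p * r + a) := by ring
    have hdvd : p ∣ c - j * (p * r + a) := (Nat.modEq_iff_dvd' hj3).mp hmod.symm
    obtain ⟨t, ht⟩ := hdvd
    have hceq : c = j * (p * r + a) + p * t := by omega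
    refine ⟨j, t, hjp, ?_, hceq⟩
    have h5 : p * t ≤ p * (m - 1) := by omega
    have h6 := Nat.le_of_mul_le_mul_left h5 hp
    omega
  · rintro ⟨j, t, hj, ht, hc⟩
    refine ⟨j, by omega, ?_, by omega, ?_⟩
    · have h1 : c = j * a + p * (j * r + t) := by rw [hc]; ring
      rw [h1]
      calc j * a + p * (j * r + t) ≡ j * a + 0 [MOD p] :=
            Nat.ModEq.add_left _ ((Nat.modEq_zero_iff_dvd).mpr ⟨j * r + t, rfl⟩)
        _ = j * a := by ring
    · have h2 : p * t ≤ p * (m - 1) := Nat.mul_le_mul_left p (by omega)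
      omega

end SubbaraoAux

namespace SubbaraoAux

noncomputable def jmap (p a r : ℕ) (f : ℕ →₀ ℕ) : ℕ →₀ ℕ :=
  Finsupp.onFinset f.support (fun i => jval p a r (f i)) (by
    intro i hi
    rw [Finsupp.mem_support_iff]
    intro h0
    simp only [h0, jval_zero] at hi
    exact hi rfl)

noncomputable def tmap (p a r : ℕ) (f : ℕ →₀ ℕ) : ℕ →₀ ℕ :=
  Finsupp.onFinset f.support (fun i => tval p a r (f i)) (by
    intro i hi
    rw [Finsupp.mem_support_iff]
    intro h0
    simp only [h0, tval_zero] at hi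
    exact hi rfl)

noncomputable def mixmap (p a r : ℕ) (jt : (ℕ →₀ ℕ) × (ℕ →₀ ℕ)) : ℕ →₀ ℕ :=
  Finsupp.onFinset (jt.1.support ∪ jt.2.support)
    (fun i => jt.1 i * (p * r + a) + p * jt.2 i) (by
    intro i hi
    rw [Finset.mem_union, Finsupp.mem_support_iff, Finsupp.mem_support_iff]
    by_contra h
    push_neg at h
    simp only [h.1, h.2] at hi
    simp at hi)

/-- `Bcond` as a predicate on count functions. -/
def PB (p a r m : ℕ) (f : ℕ →₀ ℕ) : Prop :=
  ∀ i, f i ≠ 0 → ∃ j, j ≤ p - 1 ∧ f i ≡ j * a [MOD p] ∧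
    j * (p * r + a) ≤ f i ∧ f i ≤ j * (p * r + a) + p * (m - 1)

lemma jmap_apply (p a r : ℕ) (f : ℕ →₀ ℕ) (i : ℕ) :
    jmap p a r f i = jval p a r (f i) := rfl

lemma tmap_apply (p a r : ℕ) (f : ℕ →₀ ℕ) (i : ℕ) :
    tmap p a r f i = tval p a r (f i) := rfl

lemma mixmap_apply (p a r : ℕ) (jt : (ℕ →₀ ℕ) × (ℕ →₀ ℕ)) (i : ℕ) :
    mixmap p a r jt i = jt.1 i * (p * r + a) + p * jt.2 i := rfl

lemma pb_decomp {p a r m : ℕ} (hp : 0 < p) (hco : Nat.gcd a p = 1) (hm : 1 ≤ m) {f : ℕ →₀ ℕ}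
    (hf : PB p a r m f) (i : ℕ) :
    f i = jmap p a r f i * (p * r + a) + p * tmap p a r f i ∧
      jmap p a r f i < p ∧ tmap p a r f i < m := by
  rw [jmap_apply, tmap_apply]
  by_cases h0 : f i = 0
  · rw [h0, jval_zero, tval_zero]
    omega
  · obtain ⟨j, t, hj, ht, hc⟩ := (bcond_iff hp hm a r (f i)).mp (hf i h0)
    rw [jval_spec hp hco hj hc, tval_spec hp hco hj hc]
    exact ⟨hc, hj, ht⟩

lemma wsum_mixmap (p a r : ℕ) (jt : (ℕ →₀ ℕ) × (ℕ →₀ ℕ)) :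
    wsum (mixmap p a r jt) = (p * r + a) * wsum jt.1 + p * wsum jt.2 := by
  set S := jt.1.support ∪ jt.2.support with hS
  have h1 : wsum (mixmap p a r jt) = ∑ i ∈ S, i * (jt.1 i * (p * r + a) + p * jt.2 i) :=
    wsum_eq_sum_subset Finsupp.support_onFinset_subset
  have h2 : wsum jt.1 = ∑ i ∈ S, i * jt.1 i :=
    wsum_eq_sum_subset Finset.subset_union_left
  have h3 : wsum jt.2 = ∑ i ∈ S, i * jt.2 i :=
    wsum_eq_sum_subset Finset.subset_union_right
  rw [h1, h2, h3, Finset.mul_sum, Finset.mul_sum, ← Finset.sum_add_distrib]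
  apply Finset.sum_congr rfl
  intro i _
  ring

lemma mixmap_jmap_tmap {p a r m : ℕ} (hp : 0 < p) (hco : Nat.gcd a p = 1) (hm : 1 ≤ m)
    {f : ℕ →₀ ℕ} (hf : PB p a r m f) :
    mixmap p a r (jmap p a r f, tmap p a r f) = f := by
  ext i
  rw [mixmap_apply]
  exact ((pb_decomp hp hco hm hf i).1).symm

/-- Step 2: count functions with the B-condition correspond to pairs `(j, t)`. -/
noncomputable def step2 {p a r m : ℕ} (hp : 0 < p) (hco : Nat.gcd a p = 1) (hm : 1 ≤ m)
    (n : ℕ) :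
    {f : ℕ →₀ ℕ // (f 0 = 0 ∧ wsum f = n) ∧ PB p a r m f} ≃
      {jt : (ℕ →₀ ℕ) × (ℕ →₀ ℕ) // (Aset p jt.1 ∧ Aset m jt.2) ∧
        (p * r + a) * wsum jt.1 + p * wsum jt.2 = n} where
  toFun f := ⟨(jmap p a r f.1, tmap p a r f.1), by
    obtain ⟨⟨hf0, hfw⟩, hfb⟩ := f.2
    refine ⟨⟨⟨?_, fun i => (pb_decomp hp hco hm hfb i).2.1⟩,
      ⟨?_, fun i => (pb_decomp hp hco hm hfb i).2.2⟩⟩, ?_⟩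
    · rw [jmap_apply, hf0, jval_zero]
    · rw [tmap_apply, hf0, tval_zero]
    · rw [← wsum_mixmap, mixmap_jmap_tmap hp hco hm hfb, hfw]⟩
  invFun jt := ⟨mixmap p a r jt.1, by
    obtain ⟨⟨hj, ht⟩, hw⟩ := jt.2
    refine ⟨⟨?_, by rw [wsum_mixmap]; exact hw⟩, ?_⟩
    · rw [mixmap_apply, hj.1, ht.1]; ring
    · intro i hi
      exact (bcond_iff hp hm a r _).mpr ⟨jt.1.1 i, jt.1.2 i, hj.2 i, ht.2 i, rfl⟩⟩
  left_inv f := Subtype.ext (mixmap_jmap_tmap hp hco hm f.2.2)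
  right_inv jt := by
    apply Subtype.ext
    obtain ⟨⟨hj, ht⟩, hw⟩ := jt.2
    apply Prod.ext
    · ext i
      exact jval_spec hp hco (hj.2 i) (mixmap_apply p a r jt.1 i)
    · ext i
      exact tval_spec hp hco (hj.2 i) (mixmap_apply p a r jt.1 i)

end SubbaraoAux

namespace SubbaraoAux

lemma econd_iff {p a : ℕ} (hp : 0 < p) (ha : 0 < a) (hco : Nat.gcd a p = 1) (r x : ℕ)
    (hx : ¬ p ∣ x) :
    (∃ s : ℤ, 1 ≤ s ∧ s ≤ (p : ℤ) - 1 ∧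
        (x : ℤ) ≡ -(s * ((p : ℤ) * r + a)) [ZMOD ((p : ℤ) ^ 2 * r + p * a)]) ↔
      ((p * r + a) ∣ x ∧ ¬ p ∣ x / (p * r + a)) := by
  set L : ℕ := p * r + a with hL
  have hLpos : 0 < L := by positivity
  have hLz : ((L : ℕ) : ℤ) = (p : ℤ) * r + a := by rw [hL]; push_cast; ring
  have hmod : ((p : ℤ) ^ 2 * r + p * a) = (p : ℤ) * L := by rw [hLz]; ring
  constructor
  · rintro ⟨s, hs1, hs2, hs⟩
    have hp2 : 2 ≤ p := by
      rcases Nat.lt_or_ge p 2 with h | h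
      · interval_cases p
        omega
      · exact h
    have hdvd1 : ((p : ℤ) * L) ∣ (-(s * ((p : ℤ) * r + a)) - x) := by
      rw [← hmod]; exact hs.dvd
    have hdvd2 : ((p : ℤ) * L) ∣ ((x : ℤ) + s * L) := by
      have : ((x : ℤ) + s * L) = -(-(s * ((p : ℤ) * r + a)) - x) := by rw [hLz]; ring
      rw [this]
      exact hdvd1.neg_right
    have hdvd3 : (L : ℤ) ∣ (x : ℤ) := by
      have h1 : (L : ℤ) ∣ ((x : ℤ) + s * L) :=
        dvd_trans (dvd_mul_left (L : ℤ) p) hdvd2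
      have h2 : (L : ℤ) ∣ s * L := dvd_mul_left _ _
      have := h1.sub h2
      simpa using this
    have hLx : L ∣ x := Int.ofNat_dvd.mp (by exact_mod_cast hdvd3)
    set y := x / L with hy
    have hxy : L * y = x := Nat.mul_div_cancel' hLx
    refine ⟨hLx, ?_⟩
    intro hpy
    have hxz : (x : ℤ) = (L : ℤ) * y := by exact_mod_cast hxy.symm
    have hdvd4 : ((p : ℤ) * L) ∣ ((L : ℤ) * (y + s)) := by
      have : (L : ℤ) * (y + s) = (x : ℤ) + s * L := by rw [hxz]; ring
      rw [this]; exact hdvd2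
    have hps : (p : ℤ) ∣ ((y : ℤ) + s) := by
      have hLne : (L : ℤ) ≠ 0 := by positivity
      have h5 : ((L : ℤ) * p) ∣ ((L : ℤ) * (y + s)) := by
        rwa [mul_comm ((p : ℤ)) (L : ℤ)] at hdvd4
      exact (mul_dvd_mul_iff_left hLne).mp h5
    have hpyz : (p : ℤ) ∣ (y : ℤ) := Int.natCast_dvd_natCast.mpr hpy
    have hpss : (p : ℤ) ∣ s := by
      have := hps.sub hpyz
      simpa using this
    have := Int.le_of_dvd (by omega) hpss
    omega
  · rintro ⟨hLx, hpy⟩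
    set y := x / L with hy
    have hxy : L * y = x := Nat.mul_div_cancel' hLx
    have hp2 : 2 ≤ p := by
      rcases Nat.lt_or_ge p 2 with h | h
      · interval_cases p
        exact absurd (one_dvd y) hpy
      · exact h
    have hpz : (0 : ℤ) < p := by exact_mod_cast hp
    set k : ℤ := (y : ℤ) % p with hk
    have hk0 : 0 ≤ k := Int.emod_nonneg _ (by omega)
    have hkp : k < p := Int.emod_lt_of_pos _ hpz
    have hkne : k ≠ 0 := by
      intro h
      exact hpy (Int.natCast_dvd_natCast.mp (Int.dvd_of_emod_eq_zero h))
    refine ⟨(p : ℤ) - k, by omega, by omega, ?_⟩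
    rw [Int.modEq_iff_dvd, hmod]
    have hkdef : k = (y : ℤ) - p * ((y : ℤ) / p) := Int.emod_def _ _
    have hxz : (x : ℤ) = (L : ℤ) * y := by exact_mod_cast hxy.symm
    have key : -(((p : ℤ) - k) * ((p : ℤ) * r + a)) - x = ((p : ℤ) * L) * (-((y : ℤ) / p) - 1) := by
      rw [← hLz, hkdef, hxz]
      ring
    rw [key]
    exact Dvd.intro _ rfl

end SubbaraoAux

namespace SubbaraoAux

/-- divide all part sizes by `d`, keeping only indices not divisible by `q`. -/
noncomputable def unscale (q d : ℕ) (g : ℕ →₀ ℕ) : ℕ →₀ ℕ :=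
  Finsupp.onFinset (Finset.range (g.support.sup id + 1))
    (fun y => if q ∣ y ∨ d = 0 then 0 else g (d * y)) (by
    intro y hy
    rw [Finset.mem_range]
    by_cases hc : q ∣ y ∨ d = 0
    · simp [hc] at hy
    · simp only [if_neg hc] at hy
      push_neg at hc
      have h1 : d * y ≤ g.support.sup id :=
        Finset.le_sup (f := id) (Finsupp.mem_support_iff.mpr hy)
      have h2 : y ≤ d * y := Nat.le_mul_of_pos_left y (Nat.pos_of_ne_zero hc.2)
      omega)

lemma unscale_bset (q d : ℕ) (g : ℕ →₀ ℕ) : Bset q (unscale q d g) := by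
  intro y hy hdvd
  simp [unscale, hdvd] at hy

lemma unscale_apply {q d : ℕ} (hd : d ≠ 0) {y : ℕ} (hq : ¬ q ∣ y) (g : ℕ →₀ ℕ) :
    unscale q d g y = g (d * y) := by
  simp only [unscale, Finsupp.onFinset_apply]
  rw [if_neg (by tauto)]

/-- reassemble a count function from the two families. -/
noncomputable def gmix (p a r : ℕ) (CD : (ℕ →₀ ℕ) × (ℕ →₀ ℕ)) : ℕ →₀ ℕ :=
  Finsupp.onFinset
    (CD.1.support.image (fun y => (p * r + a) * y) ∪ CD.2.support.image (fun w => p * w))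
    (fun x => if p ∣ x then CD.2 (x / p)
      else if (p * r + a) ∣ x then CD.1 (x / (p * r + a)) else 0) (by
    intro x hx
    rw [Finset.mem_union, Finset.mem_image, Finset.mem_image]
    by_cases hpx : p ∣ x
    · simp only [if_pos hpx] at hx
      exact Or.inr ⟨x / p, Finsupp.mem_support_iff.mpr hx, Nat.mul_div_cancel' hpx⟩
    · simp only [if_neg hpx] at hx
      by_cases hLx : (p * r + a) ∣ x
      · simp only [if_pos hLx] at hx
        exact Or.inl ⟨x / (p * r + a), Finsupp.mem_support_iff.mpr hx, Nat.mul_div_cancel' hLx⟩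
      · simp [if_neg hLx] at hx)

lemma gmix_apply_pdvd (p a r : ℕ) (CD : (ℕ →₀ ℕ) × (ℕ →₀ ℕ)) {x : ℕ} (hx : p ∣ x) :
    gmix p a r CD x = CD.2 (x / p) := by
  simp only [gmix, Finsupp.onFinset_apply, if_pos hx]

lemma gmix_apply_L (p a r : ℕ) (CD : (ℕ →₀ ℕ) × (ℕ →₀ ℕ)) {x : ℕ} (hpx : ¬ p ∣ x)
    (hLx : (p * r + a) ∣ x) :
    gmix p a r CD x = CD.1 (x / (p * r + a)) := by
  simp only [gmix, Finsupp.onFinset_apply, if_neg hpx, if_pos hLx]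

lemma gmix_apply_other (p a r : ℕ) (CD : (ℕ →₀ ℕ) × (ℕ →₀ ℕ)) {x : ℕ} (hpx : ¬ p ∣ x)
    (hLx : ¬ (p * r + a) ∣ x) :
    gmix p a r CD x = 0 := by
  simp only [gmix, Finsupp.onFinset_apply, if_neg hpx, if_neg hLx]

/-- the E-condition as a predicate on count functions. -/
def PE (p a r m : ℕ) (g : ℕ →₀ ℕ) : Prop :=
  ∀ x, g x ≠ 0 → (p ∣ x → ¬ (p * m ∣ x)) ∧
    (¬ p ∣ x → ∃ s : ℤ, 1 ≤ s ∧ s ≤ (p : ℤ) - 1 ∧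
      (x : ℤ) ≡ -(s * ((p : ℤ) * r + a)) [ZMOD ((p : ℤ) ^ 2 * r + p * a)])

lemma coprime_p_L {p a : ℕ} (hco : Nat.gcd a p = 1) (r : ℕ) :
    Nat.Coprime p (p * r + a) := (L_coprime hco r).symm

lemma not_p_dvd_L_mul {p a r y : ℕ} (hco : Nat.gcd a p = 1) (hpy : ¬ p ∣ y) :
    ¬ p ∣ (p * r + a) * y := by
  intro h
  exact hpy ((coprime_p_L hco r).dvd_of_dvd_mul_left h)

lemma Cmap_gmix {p a r m : ℕ} (hp : 0 < p) (ha : 0 < a) (hco : Nat.gcd a p = 1)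
    {C D : ℕ →₀ ℕ} (hC : Bset p C) (hD : Bset m D) :
    unscale p (p * r + a) (gmix p a r (C, D)) = C := by
  have hL : 0 < p * r + a := by positivity
  ext y
  by_cases hpy : p ∣ y
  · have h1 : unscale p (p * r + a) (gmix p a r (C, D)) y = 0 := by
      simp [unscale, hpy]
    rw [h1]
    by_contra h
    exact hC y (fun hc => h hc.symm) hpy
  · rw [unscale_apply hL.ne' hpy]
    rw [gmix_apply_L p a r (C, D) (not_p_dvd_L_mul hco hpy) (dvd_mul_right _ _)]
    rw [Nat.mul_div_cancel_left _ hL]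

lemma Dmap_gmix {p a r m : ℕ} (hp : 0 < p) {C D : ℕ →₀ ℕ} (hD : Bset m D) :
    unscale m p (gmix p a r (C, D)) = D := by
  ext w
  by_cases hmw : m ∣ w
  · have h1 : unscale m p (gmix p a r (C, D)) w = 0 := by
      simp [unscale, hmw]
    rw [h1]
    by_contra h
    exact hD w (fun hc => h hc.symm) hmw
  · rw [unscale_apply hp.ne' hmw]
    rw [gmix_apply_pdvd p a r (C, D) (dvd_mul_right _ _)]
    rw [Nat.mul_div_cancel_left _ hp]

lemma gmix_unscale {p a r m : ℕ} (hp : 0 < p) (ha : 0 < a) (hco : Nat.gcd a p = 1)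
    {g : ℕ →₀ ℕ} (hg0 : g 0 = 0) (hgE : PE p a r m g) :
    gmix p a r (unscale p (p * r + a) g, unscale m p g) = g := by
  have hL : 0 < p * r + a := by positivity
  ext x
  by_cases hpx : p ∣ x
  · rw [gmix_apply_pdvd p a r _ hpx]
    by_cases hmx : m ∣ x / p
    · have h1 : unscale m p g (x / p) = 0 := by simp [unscale, hmx]
      rw [h1]
      by_contra h
      have hgx : g x ≠ 0 := fun hc => h hc.symm
      have h2 := (hgE x hgx).1 hpx
      obtain ⟨k, hk⟩ := hpx
      obtain ⟨l, hl⟩ := hmx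
      rw [hk, Nat.mul_div_cancel_left _ hp] at hl
      exact h2 ⟨l, by rw [hk, hl]; ring⟩
    · rw [unscale_apply hp.ne' hmx, Nat.mul_div_cancel' hpx]
  · by_cases hgx : g x = 0
    · by_cases hLx : (p * r + a) ∣ x
      · rw [gmix_apply_L p a r _ hpx hLx]
        by_cases hpL : p ∣ x / (p * r + a)
        · simp [unscale, hpL, hgx]
        · rw [unscale_apply hL.ne' hpL, Nat.mul_div_cancel' hLx, hgx]
      · rw [gmix_apply_other p a r _ hpx hLx, hgx]
    · obtain ⟨hLx, hpL⟩ := (econd_iff hp ha hco r x hpx).mp ((hgE x hgx).2 hpx)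
      rw [gmix_apply_L p a r _ hpx hLx, unscale_apply hL.ne' hpL, Nat.mul_div_cancel' hLx]

lemma gmix_pe {p a r m : ℕ} (hp : 0 < p) (ha : 0 < a) (hco : Nat.gcd a p = 1)
    {C D : ℕ →₀ ℕ} (hC : Bset p C) (hD : Bset m D) :
    PE p a r m (gmix p a r (C, D)) := by
  intro x hx
  by_cases hpx : p ∣ x
  · rw [gmix_apply_pdvd p a r _ hpx] at hx
    have hmx : ¬ m ∣ x / p := hD _ hx
    constructor
    · intro _ hpm
      obtain ⟨l, hl⟩ := hpm
      exact hmx ⟨l, by rw [hl, mul_assoc, Nat.mul_div_cancel_left _ hp]⟩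
    · intro h; exact absurd hpx h
  · constructor
    · intro h; exact absurd h hpx
    · intro _
      by_cases hLx : (p * r + a) ∣ x
      · rw [gmix_apply_L p a r _ hpx hLx] at hx
        exact (econd_iff hp ha hco r x hpx).mpr ⟨hLx, hC _ hx⟩
      · rw [gmix_apply_other p a r _ hpx hLx] at hx
        exact absurd rfl hx

lemma gmix_zero {p a r m : ℕ} (hp : 0 < p) {C D : ℕ →₀ ℕ} (hD : Bset m D) :
    gmix p a r (C, D) 0 = 0 := by
  rw [gmix_apply_pdvd p a r _ (dvd_zero p), Nat.zero_div]
  by_contra h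
  exact hD 0 h (dvd_zero m)

lemma wsum_gmix {p a r m : ℕ} (hp : 0 < p) (ha : 0 < a) (hco : Nat.gcd a p = 1)
    {C D : ℕ →₀ ℕ} (hC : Bset p C) (hD : Bset m D) :
    wsum (gmix p a r (C, D)) = (p * r + a) * wsum C + p * wsum D := by
  have hL : 0 < p * r + a := by positivity
  set S1 := C.support.image (fun y => (p * r + a) * y) with hS1
  set S2 := D.support.image (fun w => p * w) with hS2
  have hdisj : Disjoint S1 S2 := by
    rw [Finset.disjoint_left]
    intro x hx1 hx2
    obtain ⟨y, hy, hyx⟩ := Finset.mem_image.mp hx1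
    obtain ⟨w, hw, hwx⟩ := Finset.mem_image.mp hx2
    have h1 : ¬ p ∣ x := hyx ▸ not_p_dvd_L_mul hco (hC y (Finsupp.mem_support_iff.mp hy))
    exact h1 (hwx ▸ dvd_mul_right p w)
  have h0 : wsum (gmix p a r (C, D)) = ∑ x ∈ S1 ∪ S2, x * gmix p a r (C, D) x :=
    wsum_eq_sum_subset Finsupp.support_onFinset_subset
  rw [h0, Finset.sum_union hdisj]
  have h1 : ∑ x ∈ S1, x * gmix p a r (C, D) x = (p * r + a) * wsum C := by
    rw [hS1, Finset.sum_image (by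
      intro y _ y' _ h
      exact Nat.eq_of_mul_eq_mul_left hL h)]
    have : ∀ y ∈ C.support, (p * r + a) * y * gmix p a r (C, D) ((p * r + a) * y)
        = (p * r + a) * (y * C y) := by
      intro y hy
      have hpy : ¬ p ∣ y := hC y (Finsupp.mem_support_iff.mp hy)
      rw [gmix_apply_L p a r _ (not_p_dvd_L_mul hco hpy) (dvd_mul_right _ _),
        Nat.mul_div_cancel_left _ hL]
      ring
    rw [Finset.sum_congr rfl this, ← Finset.mul_sum]
    rfl
  have h2 : ∑ x ∈ S2, x * gmix p a r (C, D) x = p * wsum D := by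
    rw [hS2, Finset.sum_image (by
      intro w _ w' _ h
      exact Nat.eq_of_mul_eq_mul_left hp h)]
    have : ∀ w ∈ D.support, p * w * gmix p a r (C, D) (p * w) = p * (w * D w) := by
      intro w hw
      rw [gmix_apply_pdvd p a r _ (dvd_mul_right _ _), Nat.mul_div_cancel_left _ hp]
      ring
    rw [Finset.sum_congr rfl this, ← Finset.mul_sum]
    rfl
  rw [h1, h2]

/-- Step 4: count functions with the E-condition correspond to pairs `(C, D)`. -/
noncomputable def step4 {p a r m : ℕ} (hp : 0 < p) (ha : 0 < a) (hco : Nat.gcd a p = 1)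
    (n : ℕ) :
    {g : ℕ →₀ ℕ // (g 0 = 0 ∧ wsum g = n) ∧ PE p a r m g} ≃
      {CD : (ℕ →₀ ℕ) × (ℕ →₀ ℕ) // (Bset p CD.1 ∧ Bset m CD.2) ∧
        (p * r + a) * wsum CD.1 + p * wsum CD.2 = n} where
  toFun g := ⟨(unscale p (p * r + a) g.1, unscale m p g.1), by
    obtain ⟨⟨hg0, hgw⟩, hgE⟩ := g.2
    refine ⟨⟨unscale_bset _ _ _, unscale_bset _ _ _⟩, ?_⟩
    rw [← wsum_gmix hp ha hco (unscale_bset _ _ _) (unscale_bset _ _ _),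
      gmix_unscale hp ha hco hg0 hgE, hgw]⟩
  invFun CD := ⟨gmix p a r CD.1, by
    obtain ⟨⟨hC, hD⟩, hw⟩ := CD.2
    refine ⟨⟨gmix_zero hp hD, ?_⟩, ?_⟩
    · rw [wsum_gmix hp ha hco hC hD]; exact hw
    · have : CD.1.1 = (CD.1.1, CD.1.2).1 := rfl
      exact gmix_pe hp ha hco hC hD⟩
  left_inv g := Subtype.ext (gmix_unscale hp ha hco g.2.1.1 g.2.2)
  right_inv CD := by
    apply Subtype.ext
    obtain ⟨⟨hC, hD⟩, hw⟩ := CD.2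
    apply Prod.ext
    · exact Cmap_gmix hp ha hco hC hD
    · exact Dmap_gmix hp hD

end SubbaraoAux

namespace SubbaraoAux

lemma wsum_glaisherBwd {q : ℕ} (hq : 0 < q) {C : ℕ →₀ ℕ} (hC : Bset q C) :
    wsum (glaisherBwd q C) = wsum C := by
  conv_rhs => rw [← glaisherFwd_glaisherBwd hq hC]
  rw [wsum_glaisherFwd hq (glaisherBwd_mem hq C)]

/-- Step 3: double Glaisher bijection. -/
noncomputable def step3 {p m : ℕ} (hp : 0 < p) (hm : 0 < m) (c1 c2 n : ℕ) :
    {jt : (ℕ →₀ ℕ) × (ℕ →₀ ℕ) // (Aset p jt.1 ∧ Aset m jt.2) ∧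
        c1 * wsum jt.1 + c2 * wsum jt.2 = n} ≃
      {CD : (ℕ →₀ ℕ) × (ℕ →₀ ℕ) // (Bset p CD.1 ∧ Bset m CD.2) ∧
        c1 * wsum CD.1 + c2 * wsum CD.2 = n} where
  toFun jt := ⟨(glaisherFwd p jt.1.1, glaisherFwd m jt.1.2), by
    obtain ⟨⟨hj, ht⟩, hw⟩ := jt.2
    refine ⟨⟨glaisherFwd_mem _ _, glaisherFwd_mem _ _⟩, ?_⟩
    rw [wsum_glaisherFwd hp hj, wsum_glaisherFwd hm ht]
    exact hw⟩
  invFun CD := ⟨(glaisherBwd p CD.1.1, glaisherBwd m CD.1.2), by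
    obtain ⟨⟨hC, hD⟩, hw⟩ := CD.2
    refine ⟨⟨glaisherBwd_mem hp _, glaisherBwd_mem hm _⟩, ?_⟩
    rw [wsum_glaisherBwd hp hC, wsum_glaisherBwd hm hD]
    exact hw⟩
  left_inv jt := by
    apply Subtype.ext
    obtain ⟨⟨hj, ht⟩, hw⟩ := jt.2
    exact Prod.ext (glaisherBwd_glaisherFwd hp hj) (glaisherBwd_glaisherFwd hm ht)
  right_inv CD := by
    apply Subtype.ext
    obtain ⟨⟨hC, hD⟩, hw⟩ := CD.2
    exact Prod.ext (glaisherFwd_glaisherBwd hp hC) (glaisherFwd_glaisherBwd hm hD)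

end SubbaraoAux


open SubbaraoAux in
/-- **Generalization of Subbarao's finitization.** Let `p, a` be positive coprime integers,
`r ≥ 0`, `m ≥ 1`. The number of partitions of `n` in which every multiplicity is congruent
to `j·a (mod p)` for some `0 ≤ j ≤ p - 1` and lies between `j(pr + a)` and
`j(pr + a) + p(m - 1)` equals the number of partitions of `n` in which every part divisible
by `p` is not divisible by `pm`, and every part not divisible by `p` is congruent to
`-s(pr + a) (mod p²r + pa)` for some `s ∈ {1, …, p - 1}`. -/
theorem B_card_eq_E_card (p a r m : ℕ) (hp : 0 < p) (ha : 0 < a)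
    (hco : Nat.gcd a p = 1) (hm : 1 ≤ m) (n : ℕ) :
    Nat.card {π : n.Partition //
      ∀ i ∈ π.parts, ∃ j, j ≤ p - 1 ∧
        π.parts.count i ≡ j * a [MOD p] ∧
        j * (p * r + a) ≤ π.parts.count i ∧
        π.parts.count i ≤ j * (p * r + a) + p * (m - 1)} =
    Nat.card {π : n.Partition //
      ∀ i ∈ π.parts,
        (p ∣ i → ¬ (p * m ∣ i)) ∧
        (¬ p ∣ i → ∃ s, 1 ≤ s ∧ s ≤ p - 1 ∧
          (i : ℤ) ≡ -(s * (p * r + a)) [ZMOD ((p : ℤ) ^ 2 * r + p * a)])} := by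

  have hiffB : ∀ π : n.Partition,
      (∀ i ∈ π.parts, ∃ j, j ≤ p - 1 ∧
        π.parts.count i ≡ j * a [MOD p] ∧
        j * (p * r + a) ≤ π.parts.count i ∧
        π.parts.count i ≤ j * (p * r + a) + p * (m - 1)) ↔
      PB p a r m (Multiset.toFinsupp π.parts) := by
    intro π
    unfold PB
    constructor
    · intro h i hi
      rw [Multiset.toFinsupp_apply] at hi ⊢
      exact h i (Multiset.count_ne_zero.mp hi)
    · intro h i hi
      have := h i (by rw [Multiset.toFinsupp_apply]; exact Multiset.count_ne_zero.mpr hi)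
      rwa [Multiset.toFinsupp_apply] at this
  have hiffE : ∀ π : n.Partition,
      (∀ i ∈ π.parts,
        (p ∣ i → ¬ (p * m ∣ i)) ∧
        (¬ p ∣ i → ∃ s, 1 ≤ s ∧ s ≤ p - 1 ∧
          (i : ℤ) ≡ -(s * (p * r + a)) [ZMOD ((p : ℤ) ^ 2 * r + p * a)])) ↔
      PE p a r m (Multiset.toFinsupp π.parts) := by
    intro π
    unfold PE
    have hsiff : ∀ i : ℕ,
        (∃ s : ℕ, 1 ≤ s ∧ s ≤ p - 1 ∧
          (i : ℤ) ≡ -((s : ℤ) * ((p : ℤ) * r + a)) [ZMOD ((p : ℤ) ^ 2 * r + p * a)]) ↔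
        (∃ s : ℤ, 1 ≤ s ∧ s ≤ (p : ℤ) - 1 ∧
          (i : ℤ) ≡ -(s * ((p : ℤ) * r + a)) [ZMOD ((p : ℤ) ^ 2 * r + p * a)]) := by
      intro i
      constructor
      · rintro ⟨s, h1, h2, h3⟩
        exact ⟨(s : ℤ), by exact_mod_cast h1, by omega, h3⟩
      · rintro ⟨s, h1, h2, h3⟩
        refine ⟨s.toNat, by omega, by omega, ?_⟩
        rwa [Int.toNat_of_nonneg (by omega)]
    constructor
    · intro h i hi
      rw [Multiset.toFinsupp_apply] at hi
      have := h i (Multiset.count_ne_zero.mp hi)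
      exact ⟨this.1, fun hpi => (hsiff i).mp (this.2 hpi)⟩
    · intro h i hi
      have := h i (by rw [Multiset.toFinsupp_apply]; exact Multiset.count_ne_zero.mpr hi)
      exact ⟨this.1, fun hpi => (hsiff i).mpr (this.2 hpi)⟩
  apply Nat.card_congr
  exact ((Equiv.subtypeEquivRight hiffB).trans
    ((partEquiv n (PB p a r m)).trans
      ((step2 hp hco hm n).trans
        ((step3 hp hm (p * r + a) p n).trans
          (((step4 hp ha hco n).symm.trans
            (partEquiv n (PE p a r m)).symm).trans
              (Equiv.subtypeEquivRight hiffE).symm)))))
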